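/- Let (ℒ, 𝒜) be a complete duality pair over a commutative ring R. Then the class of Gorenstein (ℒ,𝒜)-injective R-modules is closed under arbitrary direct products: if (M_i)_{i ∈ I} is a family of Gorenstein (ℒ,𝒜)-injective R-modules, then ∏_{i ∈ I} M_i is Gorenstein (ℒ,𝒜)-injective. -/

import Mathlib

open CategoryTheory

universe w u

/-- The character module `M⁺ = Hom_ℤ(M, ℚ/ℤ)` of `M`, as an object of `ModuleCat R`
(with the `R`-action `(r • f) x = f (r • x)`). -/
noncomputable def charMod (R : Type u) [CommRing R] (M : ModuleCat.{u} R) : ModuleCat.{u} R :=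
  ModuleCat.of R (CharacterModule M)

/-- `(𝓜, 𝓒)` is a duality pair over `R`: both classes are closed under isomorphism,
`M ∈ 𝓜 ↔ M⁺ ∈ 𝓒`, and `𝓒` is closed under direct summands and finite direct sums. -/
structure IsDualityPair (R : Type u) [CommRing R]
    (Mc Cc : ModuleCat.{u} R → Prop) : Prop where
  isoClosed_fst : ∀ {A B : ModuleCat.{u} R}, (A ≅ B) → Mc A → Mc B
  isoClosed_snd : ∀ {A B : ModuleCat.{u} R}, (A ≅ B) → Cc A → Cc B
  char_mem_iff : ∀ M : ModuleCat.{u} R, Mc M ↔ Cc (charMod R M)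
  summand_closed : ∀ A B : ModuleCat.{u} R, Cc (ModuleCat.of R (A × B)) → Cc A
  finSum_closed : ∀ A B : ModuleCat.{u} R, Cc A → Cc B → Cc (ModuleCat.of R (A × B))

/-- A duality pair `(𝓜, 𝓒)` is perfect if `R ∈ 𝓜` and `𝓜` is closed under arbitrary
direct sums and under extensions. -/
structure IsPerfectDualityPair (R : Type u) [CommRing R]
    (Mc Cc : ModuleCat.{u} R → Prop) extends IsDualityPair R Mc Cc : Prop where
  self_mem : Mc (ModuleCat.of R R)
  directSum_closed : ∀ (ι : Type u) (A : ι → ModuleCat.{u} R),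
    (∀ i, Mc (A i)) → Mc (ModuleCat.of R (DirectSum ι (fun i => A i)))
  extension_closed : ∀ S : ShortComplex (ModuleCat.{u} R),
    S.ShortExact → Mc S.X₁ → Mc S.X₃ → Mc S.X₂

/-- `(ℒ, 𝒜)` is a complete duality pair: `{ℒ, 𝒜}` is a symmetric duality pair
with `(ℒ, 𝒜)` perfect. -/
structure IsCompleteDualityPair (R : Type u) [CommRing R]
    (Lc Ac : ModuleCat.{u} R → Prop) : Prop where
  perfect : IsPerfectDualityPair R Lc Ac
  snd : IsDualityPair R Ac Lc

/-- The chain complex of abelian groups `Hom_R(M, X)` induced by a chain complex `X`. -/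
noncomputable def homFromComplex (R : Type u) [CommRing R] (M : ModuleCat.{u} R)
    (X : ChainComplex (ModuleCat.{u} R) ℤ) : ChainComplex AddCommGrpCat.{u} ℤ :=
  ((preadditiveCoyoneda.obj (Opposite.op M)).mapHomologicalComplex _).obj X

/-- A complex is exact if its homology vanishes in every degree. -/
def ComplexExact {V : Type*} [Category V] [Limits.HasZeroMorphisms V] {ι : Type*}
    {c : ComplexShape ι} (X : HomologicalComplex V c) : Prop :=
  ∀ n, X.ExactAt n

/-- `M` is Gorenstein `(ℒ,𝒜)`-injective: `M ≅ Z₀I` for some exact complex `I` of injectives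
such that `Hom_R(A, I)` is exact for all `A ∈ 𝒜`. -/
def IsGorensteinInjective (R : Type u) [CommRing R]
    (Ac : ModuleCat.{u} R → Prop) (M : ModuleCat.{u} R) : Prop :=
  ∃ I : ChainComplex (ModuleCat.{u} R) ℤ,
    (∀ n, Injective (I.X n)) ∧ ComplexExact I ∧
      (∀ A, Ac A → ComplexExact (homFromComplex R A I)) ∧
      Nonempty (M ≅ I.cycles 0)




section Aux

variable {R : Type u} [CommRing R] {ι : Type u}

/-- The componentwise product of a family of chain complexes of modules. -/
noncomputable def piCx (I : ι → ChainComplex (ModuleCat.{u} R) ℤ) :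
    ChainComplex (ModuleCat.{u} R) ℤ where
  X n := ModuleCat.of R (∀ i, (I i).X n)
  d n m := ModuleCat.ofHom (LinearMap.pi fun i => (((I i).d n m).hom).comp (LinearMap.proj i))
  shape n m h := by
    ext x i
    show (I i).d n m (x i) = (0 : (I i).X n ⟶ (I i).X m) (x i)
    rw [(I i).shape n m h]
  d_comp_d' n m k _ _ := by
    ext x i
    show ((I i).d n m ≫ (I i).d m k) (x i) = (0 : (I i).X n ⟶ (I i).X k) (x i)
    rw [(I i).d_comp_d]

lemma piCx_d_apply (I : ι → ChainComplex (ModuleCat.{u} R) ℤ) (n m : ℤ)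
    (x : ∀ i, (I i).X n) (i : ι) : (piCx I).d n m x i = (I i).d n m (x i) := rfl

end Aux

section Aux2

variable {R : Type u} [CommRing R] {ι : Type u}

lemma exactAt_iff_elem (X : ChainComplex (ModuleCat.{u} R) ℤ) (n : ℤ) :
    X.ExactAt n ↔ ∀ x : X.X n, X.d n (n-1) x = 0 →
      ∃ y : X.X (n+1), X.d (n+1) n y = x := by
  rw [X.exactAt_iff' (n+1) n (n-1) (ChainComplex.prev ℤ n) (ChainComplex.next ℤ n)]
  exact (X.sc' (n+1) n (n-1)).moduleCat_exact_iff

lemma exactAt_iff_elem_ab (X : ChainComplex AddCommGrpCat.{u} ℤ) (n : ℤ) :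
    X.ExactAt n ↔ ∀ x : X.X n, X.d n (n-1) x = 0 →
      ∃ y : X.X (n+1), X.d (n+1) n y = x := by
  rw [X.exactAt_iff' (n+1) n (n-1) (ChainComplex.prev ℤ n) (ChainComplex.next ℤ n)]
  exact (X.sc' (n+1) n (n-1)).ab_exact_iff

lemma piCx_injective (I : ι → ChainComplex (ModuleCat.{u} R) ℤ)
    (h : ∀ i n, Injective ((I i).X n)) (n : ℤ) : Injective ((piCx I).X n) := by
  haveI : ∀ i, Injective ((fun i => (I i).X n) i) := fun i => h i n
  exact Injective.of_iso (ModuleCat.piIsoPi _) inferInstance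

lemma piCx_exact (I : ι → ChainComplex (ModuleCat.{u} R) ℤ)
    (h : ∀ i, ComplexExact (I i)) : ComplexExact (piCx I) := by
  intro n
  rw [exactAt_iff_elem]
  intro x hx
  have key : ∀ i, ∃ y, (I i).d (n+1) n y = x i := by
    intro i
    have hxi : (I i).d n (n-1) (x i) = 0 := congrFun hx i
    exact (exactAt_iff_elem (I i) n).1 (h i n) (x i) hxi
  choose y hy using key
  exact ⟨y, funext hy⟩


lemma piCx_hom_exact (I : ι → ChainComplex (ModuleCat.{u} R) ℤ)
    (A : ModuleCat.{u} R)
    (h : ∀ i, ComplexExact (homFromComplex R A (I i))) :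
    ComplexExact (homFromComplex R A (piCx I)) := by
  intro n
  rw [exactAt_iff_elem_ab]
  intro f hf
  have hf' : (f ≫ (piCx I).d n (n-1) : A ⟶ (piCx I).X (n-1)) = 0 := hf
  have key : ∀ i, ∃ g : A ⟶ (I i).X (n+1),
      (g ≫ (I i).d (n+1) n : A ⟶ (I i).X n)
        = ModuleCat.ofHom ((LinearMap.proj i).comp f.hom) := by
    intro i
    have hz : ((homFromComplex R A (I i)).d n (n-1))
        (ModuleCat.ofHom ((LinearMap.proj i).comp f.hom)) = 0 := by
      show (ModuleCat.ofHom ((LinearMap.proj i).comp f.hom)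
          ≫ (I i).d n (n-1) : A ⟶ (I i).X (n-1)) = 0
      apply ModuleCat.hom_ext; apply LinearMap.ext
      intro a
      have := LinearMap.congr_fun (congrArg ModuleCat.Hom.hom hf') a
      exact congrFun this i
    exact (exactAt_iff_elem_ab (homFromComplex R A (I i)) n).1 (h i n) _ hz
  choose g hg using key
  refine ⟨ModuleCat.ofHom (LinearMap.pi fun i => (g i).hom), ?_⟩
  show (ModuleCat.ofHom (LinearMap.pi fun i => (g i).hom)
      ≫ (piCx I).d (n+1) n : A ⟶ (piCx I).X n) = f
  apply ModuleCat.hom_ext; apply LinearMap.ext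
  intro a
  funext i
  exact LinearMap.congr_fun (congrArg ModuleCat.Hom.hom (hg i)) a

/-- The kernel of a product map is the product of the kernels. -/
noncomputable def kerPiLEquiv {N P : ι → Type u}
    [∀ i, AddCommGroup (N i)] [∀ i, Module R (N i)]
    [∀ i, AddCommGroup (P i)] [∀ i, Module R (P i)] (f : ∀ i, N i →ₗ[R] P i) :
    LinearMap.ker (LinearMap.pi fun i => (f i).comp (LinearMap.proj i))
      ≃ₗ[R] ∀ i, LinearMap.ker (f i) where
  toFun x i := ⟨(x : ∀ i, N i) i,
    LinearMap.mem_ker.mpr (congrFun (LinearMap.mem_ker.mp x.2) i)⟩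
  map_add' x y := rfl
  map_smul' c x := rfl
  invFun y := ⟨fun i => (y i : N i),
    LinearMap.mem_ker.mpr (funext fun i => (y i).2)⟩
  left_inv x := rfl
  right_inv y := rfl

end Aux2

/-- For a complete duality pair `(ℒ, 𝒜)`, the class of Gorenstein `(ℒ,𝒜)`-injective modules
is closed under arbitrary direct products. -/
theorem gorensteinInjective_closed_under_products
    (R : Type u) [CommRing R] (Lc Ac : ModuleCat.{u} R → Prop)
    (h : IsCompleteDualityPair R Lc Ac)
    (ι : Type u) (M : ι → ModuleCat.{u} R)
    (hM : ∀ i, IsGorensteinInjective R Ac (M i)) :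
    IsGorensteinInjective R Ac (ModuleCat.of R (∀ i, M i)) := by
  choose I hInj hEx hHom hIso using hM
  refine ⟨piCx I, piCx_injective I hInj, piCx_exact I hEx,
    fun A hA => piCx_hom_exact I A (fun i => hHom i A hA), ⟨?_⟩⟩
  have h01 : (ComplexShape.down ℤ).prev 0 = 1 := by rw [ChainComplex.prev]; norm_num
  have h0m : (ComplexShape.down ℤ).next 0 = -1 := by rw [ChainComplex.next]; norm_num
  have e₀ : ∀ i, M i ≅ ModuleCat.of R (LinearMap.ker (((I i).sc' 1 0 (-1)).g).hom) :=
    fun i =>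
      (Classical.choice (hIso i)) ≪≫ (I i).cyclesIsoSc' 1 0 (-1) h01 h0m ≪≫
        ((I i).sc' 1 0 (-1)).moduleCatCyclesIso
  refine ?_ ≪≫ (((piCx I).sc' 1 0 (-1)).moduleCatCyclesIso).symm ≪≫
    ((piCx I).cyclesIsoSc' 1 0 (-1) h01 h0m).symm
  exact ((LinearEquiv.piCongrRight fun i => (e₀ i).toLinearEquiv) ≪≫ₗ
    (kerPiLEquiv fun i => (((I i).sc' 1 0 (-1)).g).hom).symm).toModuleIso
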